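/- Fix b ≥ 2, a divisor n > 1 of b² + b − 1 with b of multiplicative order r > 1 modulo n, and a prime power q with n ∣ q − 1. Let V = (F_q)^r with basis e₀,…,e_{r−1}, and let U₁ = span{e_i ∧ e_{i+1 mod r} : 0 ≤ i ≤ r−1} ⊆ ∧²V. Then the linear map ψ : V → U₁ defined by e_i ↦ e_{i+1} ∧ e_{i+2} (indices mod r) intertwines the actions of the cyclic permutation matrix A (e_i ↦ e_{i+1 mod r}) and the diagonal matrix B = diag(ζ, ζ^b, …, ζ^{b^{r−1}}) for ζ an n-th root of unity in F_q, and ψ is a bijection. -/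

import Mathlib

open TensorProduct

section WedgeSetup

variable (F V : Type*) [Field F] [AddCommGroup V] [Module F V]

/-- The subspace of `V ⊗ V` generated by the squares `v ⊗ v`. -/
def sqRel : Submodule F (V ⊗[F] V) :=
  Submodule.span F {x : V ⊗[F] V | ∃ v : V, x = v ⊗ₜ[F] v}

/-- The exterior square `∧²V`, realized as `(V ⊗ V)/⟨v ⊗ v⟩`. -/
abbrev Wedge := (V ⊗[F] V) ⧸ sqRel F V

variable {F V}

/-- The wedge `v ∧ w` of two vectors. -/
noncomputable def wedge (v w : V) : Wedge F V := Submodule.Quotient.mk (v ⊗ₜ[F] w)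

lemma sqRel_le_comap (g : V →ₗ[F] V) :
    sqRel F V ≤ (sqRel F V).comap (TensorProduct.map g g) := by
  rw [sqRel, Submodule.span_le]
  rintro x ⟨v, rfl⟩
  have : (TensorProduct.map g g) (v ⊗ₜ[F] v) = g v ⊗ₜ[F] g v := by
    simp [TensorProduct.map_tmul]
  exact Submodule.mem_comap.mpr (by rw [this]; exact Submodule.subset_span ⟨g v, rfl⟩)

/-- The map induced by `g : V →ₗ V` on the exterior square `∧²V`. -/
noncomputable def wedgeMap (g : V →ₗ[F] V) : Wedge F V →ₗ[F] Wedge F V :=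
  Submodule.mapQ _ _ (TensorProduct.map g g) (sqRel_le_comap g)

end WedgeSetup

section Aux
variable {F : Type*} [Field F] {V : Type*} [AddCommGroup V] [Module F V]

lemma wedge_smul_left (c : F) (v w : V) :
    (wedge (c • v) w : Wedge F V) = c • wedge v w := by
  rw [wedge, wedge, ← TensorProduct.smul_tmul']
  exact Submodule.Quotient.mk_smul _ _ _

lemma wedge_smul_right (c : F) (v w : V) :
    (wedge v (c • w) : Wedge F V) = c • wedge v w := by
  rw [wedge, wedge, TensorProduct.tmul_smul]
  exact Submodule.Quotient.mk_smul _ _ _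

lemma wedgeMap_wedge (g : V →ₗ[F] V) (v w : V) :
    wedgeMap g (wedge v w) = wedge (g v) (g w) := by
  rw [wedge, wedgeMap, Submodule.mapQ_apply, TensorProduct.map_tmul, wedge]

noncomputable def contra (F : Type*) [Field F] (r : ℕ) [NeZero r] :
    (Fin r → F) →ₗ[F] (Fin r → F) →ₗ[F] (Fin r → F) :=
  LinearMap.mk₂ F (fun v w => fun j => v j * w (j + 1) - v (j + 1) * w j)
    (fun v v' w => by funext j; simp only [Pi.add_apply]; ring)
    (fun c v w => by funext j; simp only [Pi.smul_apply, smul_eq_mul]; ring)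
    (fun v w w' => by funext j; simp only [Pi.add_apply]; ring)
    (fun c v w => by funext j; simp only [Pi.smul_apply, smul_eq_mul]; ring)

lemma contra_apply (F : Type*) [Field F] (r : ℕ) [NeZero r] (v w : Fin r → F) (j : Fin r) :
    contra F r v w j = v j * w (j + 1) - v (j + 1) * w j := rfl

noncomputable def contraW (F : Type*) [Field F] (r : ℕ) [NeZero r] :
    Wedge F (Fin r → F) →ₗ[F] (Fin r → F) :=
  Submodule.liftQ _ (TensorProduct.lift (contra F r)) (by
    rw [sqRel, Submodule.span_le]
    rintro x ⟨v, rfl⟩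
    simp only [SetLike.mem_coe, LinearMap.mem_ker, TensorProduct.lift.tmul]
    funext j
    simp only [contra_apply, Pi.zero_apply]
    ring)

lemma contraW_wedge (F : Type*) [Field F] (r : ℕ) [NeZero r] (v w : Fin r → F) :
    contraW F r (wedge v w) = contra F r v w := by
  rw [wedge, contraW, Submodule.liftQ_apply, TensorProduct.lift.tmul]

end Aux

/-- Fix `b ≥ 2`, a divisor `n > 1` of `b² + b − 1` with `b` of
multiplicative order `r > 1` modulo `n`, and a prime power `q` with `n ∣ q − 1`.
Let `V = (F_q)^r` with standard basis `e₀,…,e_{r−1}`, let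
`U₁ = span{e_i ∧ e_{i+1}} ⊆ ∧²V`, let `A` be the cyclic shift `e_i ↦ e_{i+1}`,
and let `B = diag(ζ, ζ^b, …, ζ^{b^{r−1}})` for `ζ` an `n`-th root of unity.
Then the linear map `ψ : V → ∧²V`, `e_i ↦ e_{i+1} ∧ e_{i+2}`, intertwines the
actions of `A` and `B` on `V` and on `∧²V`, and is a bijection onto `U₁`. -/
theorem stmt16 (b n r q : ℕ) [NeZero r]
    (hb : 2 ≤ b) (hn : 1 < n) (hdvd : n ∣ b ^ 2 + b - 1)
    (hr : r = orderOf (b : ZMod n)) (hr1 : 1 < r)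
    (hq : IsPrimePow q) (hnq : n ∣ q - 1)
    {F : Type*} [Field F] [Fintype F] (hF : Fintype.card F = q)
    (ζ : F) (hζ : ζ ^ n = 1) :
    ∀ (A B : (Fin r → F) →ₗ[F] (Fin r → F)),
      A = LinearMap.funLeft F F (fun j : Fin r => j - 1) →
      B = LinearMap.pi (fun i : Fin r => (ζ ^ (b ^ (i : ℕ))) • LinearMap.proj i) →
      ∀ ψ : (Fin r → F) →ₗ[F] Wedge F (Fin r → F),
        ψ = (Pi.basisFun F (Fin r)).constr F
          (fun i : Fin r => wedge (Pi.single (i + 1) (1 : F))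
            (Pi.single (i + 1 + 1) (1 : F))) →
        (∀ v : Fin r → F, ψ (A v) = wedgeMap A (ψ v)) ∧
        (∀ v : Fin r → F, ψ (B v) = wedgeMap B (ψ v)) ∧
        Function.Injective ψ ∧
        LinearMap.range ψ = Submodule.span F {x : Wedge F (Fin r → F) |
          ∃ i : Fin r, x = wedge (Pi.single i (1 : F)) (Pi.single (i + 1) (1 : F))} := by
  intro A B hAdef hBdef ψ hψdef
  haveI : Fact (1 < n) := ⟨hn⟩
  have h0 : ((b ^ 2 + b - 1 : ℕ) : ZMod n) = 0 :=
    (ZMod.natCast_eq_zero_iff _ _).mpr hdvd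
  have hsub : b ^ 2 + b - 1 + 1 = b ^ 2 + b := Nat.sub_add_cancel (by nlinarith)
  have h1 : (b : ZMod n) ^ 2 + (b : ZMod n) = 1 := by
    have h1' : ((b ^ 2 + b : ℕ) : ZMod n) = 1 := by
      rw [← hsub, Nat.cast_add, h0, Nat.cast_one, zero_add]
    push_cast at h1'
    exact h1'
  have hr3 : 3 ≤ r := by
    by_contra hcon
    push_neg at hcon
    interval_cases r
    have hb2 : (b : ZMod n) ^ 2 = 1 := by rw [hr]; exact pow_orderOf_eq_one _
    have hbz : (b : ZMod n) = 0 := by linear_combination h1 - hb2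
    rw [hbz] at hb2
    simp at hb2
  -- Fin r arithmetic
  have hv1 : ((1 : Fin r) : ℕ) = 1 := by
    rw [Fin.val_one']; exact Nat.mod_eq_of_lt (by omega)
  have hval : ∀ j : Fin r, ((j + 1 : Fin r) : ℕ) = ((j : ℕ) + 1) % r := by
    intro j; rw [Fin.val_add, hv1]
  have h110 : (1 + 1 : Fin r) ≠ 0 := by
    intro h
    have h2 := congrArg Fin.val h
    rw [hval 1, hv1, Nat.mod_eq_of_lt (by omega), Fin.val_zero] at h2
    omega
  have h10 : (1 : Fin r) ≠ 0 := by
    intro h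
    have h2 := congrArg Fin.val h
    rw [hv1, Fin.val_zero] at h2
    omega
  have hne : ∀ j : Fin r, j + 1 ≠ j := fun j h => h10 (by
    have h' : j + 1 = j + 0 := by rw [add_zero]; exact h
    exact add_left_cancel h')
  have hne2 : ∀ j : Fin r, j + 1 + 1 ≠ j := fun j h => h110 (by
    have h' : j + (1 + 1) = j + 0 := by rw [add_zero, ← add_assoc]; exact h
    exact add_left_cancel h')
  have hne' : ∀ j : Fin r, j ≠ j + 1 := fun j => (hne j).symm
  have hne2' : ∀ j : Fin r, j ≠ j + 1 + 1 := fun j => (hne2 j).symm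
  -- basis computations
  have hbasis : ∀ i : Fin r, (Pi.basisFun F (Fin r)) i = Pi.single i (1 : F) :=
    fun i => Pi.basisFun_apply F (Fin r) i
  have hψ : ∀ i : Fin r, ψ (Pi.single i 1) =
      wedge (Pi.single (i + 1) (1 : F)) (Pi.single (i + 1 + 1) (1 : F)) := by
    intro i
    rw [hψdef, ← hbasis i]
    exact (Pi.basisFun F (Fin r)).constr_basis F _ i
  have hA : ∀ i : Fin r, A (Pi.single i (1 : F)) = Pi.single (i + 1) 1 := by
    intro i
    rw [hAdef]
    funext j
    simp [LinearMap.funLeft_apply, Pi.single_apply, sub_eq_iff_eq_add]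
  have hB : ∀ i : Fin r, B (Pi.single i (1 : F)) = (ζ ^ (b ^ (i : ℕ))) • (Pi.single i 1 : Fin r → F) := by
    intro i
    rw [hBdef]
    funext j
    simp only [LinearMap.pi_apply, LinearMap.smul_apply, LinearMap.proj_apply,
      Pi.smul_apply, smul_eq_mul, Pi.single_apply]
    split_ifs with h
    · subst h; rfl
    · simp
  -- zeta congruence machinery
  have hzpow : ∀ s : ℕ, ζ ^ s = ζ ^ (s % n) := by
    intro s
    conv_lhs => rw [← Nat.mod_add_div s n]
    rw [pow_add, pow_mul, hζ, one_pow, mul_one]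
  have hzeta : ∀ s t : ℕ, ((s : ZMod n) = (t : ZMod n)) → ζ ^ s = ζ ^ t := by
    intro s t h
    have hm : s % n = t % n := (ZMod.natCast_eq_natCast_iff s t n).mp h
    rw [hzpow s, hzpow t, hm]
  have hpowmod : ∀ m : ℕ, (b : ZMod n) ^ (m % r) = (b : ZMod n) ^ m := by
    intro m; rw [hr]; exact pow_mod_orderOf _ _
  have hcastv : ∀ j : Fin r,
      (b : ZMod n) ^ ((j + 1 : Fin r) : ℕ) = (b : ZMod n) ^ ((j : ℕ) + 1) := by
    intro j; rw [hval j, hpowmod]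
  have hzkey : ∀ i : Fin r,
      ζ ^ (b ^ (((i + 1 : Fin r)) : ℕ) + b ^ (((i + 1 + 1 : Fin r)) : ℕ)) = ζ ^ (b ^ (i : ℕ)) := by
    intro i
    apply hzeta
    push_cast
    rw [hcastv (i + 1), pow_succ, hcastv i]
    linear_combination ((b : ZMod n) ^ ((i : ℕ))) * h1
  -- intertwining
  have hAint : ψ ∘ₗ A = wedgeMap A ∘ₗ ψ := by
    apply Module.Basis.ext (Pi.basisFun F (Fin r))
    intro i
    rw [LinearMap.comp_apply, LinearMap.comp_apply, hbasis i, hA i, hψ i, hψ (i + 1),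
      wedgeMap_wedge, hA (i + 1), hA (i + 1 + 1)]
  have hBint : ψ ∘ₗ B = wedgeMap B ∘ₗ ψ := by
    apply Module.Basis.ext (Pi.basisFun F (Fin r))
    intro i
    rw [LinearMap.comp_apply, LinearMap.comp_apply, hbasis i, hB i, map_smul, hψ i,
      wedgeMap_wedge, hB (i + 1), hB (i + 1 + 1), wedge_smul_left, wedge_smul_right,
      smul_smul, ← pow_add, hzkey i]
  -- injectivity
  have hcon : ∀ i : Fin r, contraW F r (ψ (Pi.single i 1)) = Pi.single (i + 1) (1 : F) := by
    intro i
    rw [hψ i, contraW_wedge]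
    funext j
    rw [contra_apply]
    simp only [Pi.single_apply]
    rcases eq_or_ne j (i + 1) with hj | hj
    · subst hj
      rw [if_pos rfl, if_pos rfl, if_neg (hne (i + 1)), if_neg (hne' (i + 1))]
      norm_num
    · rcases eq_or_ne j (i + 1 + 1) with hj2 | hj2
      · subst hj2
        rw [if_neg hj, if_pos rfl, if_neg (hne (i + 1 + 1)), if_neg (hne2 (i + 1))]
        norm_num
      · rw [if_neg hj, if_neg hj2]
        simp
  have hcomp : contraW F r ∘ₗ ψ = A := by
    apply Module.Basis.ext (Pi.basisFun F (Fin r))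
    intro i
    rw [LinearMap.comp_apply, hbasis i, hcon i, hA i]
  have hAinj : Function.Injective A := by
    intro u v h
    funext j
    have h2 := congrFun h (j + 1)
    rw [hAdef] at h2
    simpa [LinearMap.funLeft_apply, add_sub_cancel_right] using h2
  have hinj : Function.Injective ψ := by
    intro u v h
    apply hAinj
    rw [← hcomp]
    simp only [LinearMap.comp_apply, h]
  -- range
  have hrange : LinearMap.range ψ = Submodule.span F {x : Wedge F (Fin r → F) |
      ∃ i : Fin r, x = wedge (Pi.single i (1 : F)) (Pi.single (i + 1) (1 : F))} := by
    rw [hψdef, Module.Basis.constr_range]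
    congr 1
    ext x
    constructor
    · rintro ⟨i, rfl⟩
      exact ⟨i + 1, rfl⟩
    · rintro ⟨i, rfl⟩
      exact ⟨i - 1, by simp only [sub_add_cancel]⟩
  refine ⟨fun v => ?_, fun v => ?_, hinj, hrange⟩
  · simpa using LinearMap.congr_fun hAint v
  · simpa using LinearMap.congr_fun hBint v
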